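/- Let a = 31207386885274502188173522132023665167365193670823768234185354856354918873864275 and M = 36812852443922071184402498913076070503146229820861211558347078871354783744850778, and for n ∈ ℕ set u_n = F_{3n}/2. Then for every integer x with x ≡ a (mod M) and all k, b ∈ ℕ, one has x² − u_{8+14k} ≠ 211^b and x² − u_{8+14k} ≠ −211^b. -/
import Mathlib

set_option maxRecDepth 40000

/-- `u n = F_{3n} / 2`, an integer since `F_{3n}` is always even. -/
def u (n : ℕ) : ℤ := (Nat.fib (3 * n) : ℤ) / 2

lemma two_mul_u (n : ℕ) : 2 * u n = (Nat.fib (3 * n) : ℤ) := by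
  have h : (2 : ℤ) ∣ (Nat.fib (3 * n) : ℤ) := by
    have := Nat.fib_dvd 3 (3 * n) ⟨n, rfl⟩
    exact_mod_cast Int.natCast_dvd_natCast.mpr this
  exact Int.mul_ediv_cancel' h

lemma fib629 : ((Nat.fib 629 : ℕ) : ZMod 589) = 1 := by decide
lemma fib630 : ((Nat.fib 630 : ℕ) : ZMod 589) = 0 := by decide

lemma fib_add_630 (n : ℕ) : ((Nat.fib (n + 630) : ℕ) : ZMod 589) = (Nat.fib n : ZMod 589) := by
  have h : Nat.fib (n + 629 + 1) = Nat.fib n * Nat.fib 629 + Nat.fib (n + 1) * Nat.fib 630 :=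
    Nat.fib_add n 629
  have h2 : (n + 630) = (n + 629 + 1) := by ring
  rw [h2, h]
  push_cast
  rw [fib629, fib630]
  ring

lemma fib_period (q r : ℕ) :
    ((Nat.fib (24 + 42 * (15 * q + r)) : ℕ) : ZMod 589) = (Nat.fib (24 + 42 * r) : ZMod 589) := by
  induction q with
  | zero => norm_num
  | succ q ih =>
      have h : 24 + 42 * (15 * (q + 1) + r) = (24 + 42 * (15 * q + r)) + 630 := by ring
      rw [h, fib_add_630, ih]

lemma pow211 (b : ℕ) : (211 : ZMod 589) ^ b = 211 ^ (b % 18) := by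
  conv_lhs => rw [← Nat.div_add_mod b 18, pow_add, pow_mul]
  have h : (211 : ZMod 589) ^ 18 = 1 := by decide
  rw [h, one_pow, one_mul]

lemma key : ∀ r < 15, ∀ c < 18,
    2 * (572 : ZMod 589) ^ 2 - (Nat.fib (24 + 42 * r) : ZMod 589) ≠ 2 * 211 ^ c ∧
    2 * (572 : ZMod 589) ^ 2 - (Nat.fib (24 + 42 * r) : ZMod 589) ≠ -(2 * 211 ^ c) := by
  decide

/-- Case 4.4 of the proof of Theorem 1.3: for every integer
`x ≡ a (mod M)` and all `k, b ∈ ℕ`, `x² - u_{8+14k}` is not `±211^b`. -/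
theorem sq_sub_u_ne_pm_pow_211
    (x : ℤ)
    (hx : x ≡ 31207386885274502188173522132023665167365193670823768234185354856354918873864275
      [ZMOD 36812852443922071184402498913076070503146229820861211558347078871354783744850778])
    (k b : ℕ) :
    x ^ 2 - u (8 + 14 * k) ≠ 211 ^ b ∧ x ^ 2 - u (8 + 14 * k) ≠ -(211 ^ b) := by
  have hdvd : (589 : ℤ) ∣ 36812852443922071184402498913076070503146229820861211558347078871354783744850778 := by
    norm_num
  have hx589 : (x : ZMod 589) = (572 : ZMod 589) := by
    have h : x ≡ 31207386885274502188173522132023665167365193670823768234185354856354918873864275 [ZMOD (589 : ℕ)] :=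
      Int.ModEq.of_dvd hdvd hx
    have := (ZMod.intCast_eq_intCast_iff _ _ 589).mpr h
    rw [this]; decide
  -- reduce fib index
  have hidx : 3 * (8 + 14 * k) = 24 + 42 * k := by ring
  have hk : k = 15 * (k / 15) + k % 15 := (Nat.div_add_mod' k 15).symm ▸ by omega
  have hfib : ((Nat.fib (3 * (8 + 14 * k)) : ℕ) : ZMod 589)
      = (Nat.fib (24 + 42 * (k % 15)) : ZMod 589) := by
    rw [hidx]
    calc ((Nat.fib (24 + 42 * k) : ℕ) : ZMod 589)
        = ((Nat.fib (24 + 42 * (15 * (k / 15) + k % 15)) : ℕ) : ZMod 589) := by rw [← hk]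
      _ = _ := fib_period _ _
  have hkey := key (k % 15) (Nat.mod_lt _ (by norm_num)) (b % 18) (Nat.mod_lt _ (by norm_num))
  constructor <;> intro heq
  · apply hkey.1
    have h2 : 2 * x ^ 2 - (Nat.fib (3 * (8 + 14 * k)) : ℤ) = 2 * 211 ^ b := by
      rw [← two_mul_u]; linarith
    have := congrArg (fun z : ℤ => (z : ZMod 589)) h2
    simp only [Int.cast_sub, Int.cast_mul, Int.cast_pow, Int.cast_ofNat, Int.cast_natCast,
      Int.cast_two] at this
    rw [hx589, hfib, pow211] at this
    exact_mod_cast this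
  · apply hkey.2
    have h2 : 2 * x ^ 2 - (Nat.fib (3 * (8 + 14 * k)) : ℤ) = -(2 * 211 ^ b) := by
      rw [← two_mul_u]; linarith
    have := congrArg (fun z : ℤ => (z : ZMod 589)) h2
    simp only [Int.cast_sub, Int.cast_mul, Int.cast_pow, Int.cast_neg, Int.cast_ofNat,
      Int.cast_natCast, Int.cast_two] at this
    rw [hx589, hfib, pow211] at this
    exact_mod_cast this
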